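/- The TRS consisting of the single rule f(a,x) → f(x,x) is weakly bounded duplicating but not bounded duplicating: {⊤ → ⊥} / R is terminating, but {◇(x) → x} / R is not terminating. -/

import Mathlib

/-- First-order terms over signature `F` and variables `V`. -/
inductive Tm (F V : Type) : Type
  | var : V → Tm F V
  | app : F → List (Tm F V) → Tm F V

namespace Tm

variable {F V G : Type}

/-- Applying a substitution to a term. -/
def subst (σ : V → Tm F V) : Tm F V → Tm F V
  | var x => σ x
  | app f ts => app f (ts.attach.map (fun ⟨t, _⟩ => subst σ t))
  decreasing_by · simp only [Tm.app.sizeOf_spec]; have := List.sizeOf_lt_of_mem ‹_›; omega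

/-- List of (occurrences of) variables of a term. -/
def vars : Tm F V → List V
  | var x => [x]
  | app _ ts => ts.attach.flatMap (fun ⟨t, _⟩ => vars t)
  decreasing_by · simp only [Tm.app.sizeOf_spec]; have := List.sizeOf_lt_of_mem ‹_›; omega

/-- Renaming the function symbols of a term. -/
def mapF (g : F → G) : Tm F V → Tm G V
  | var x => var x
  | app f ts => app (g f) (ts.attach.map (fun ⟨t, _⟩ => mapF g t))
  decreasing_by · simp only [Tm.app.sizeOf_spec]; have := List.sizeOf_lt_of_mem ‹_›; omega

/-- The subterm at a position (a list of argument indices), if the position exists. -/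
def sub : List Nat → Tm F V → Option (Tm F V)
  | [], t => some t
  | _ :: _, var _ => none
  | i :: p, app _ ts => (ts[i]?).bind (sub p)

/-- Replacing the subterm at a position by another term. -/
def repl : List Nat → Tm F V → Tm F V → Tm F V
  | [], _, u => u
  | _ :: _, var x, _ => var x
  | i :: p, app f ts, u =>
      app f (match ts[i]? with
             | some t => ts.set i (repl p t u)
             | none => ts)

end Tm

/-- A rewrite rule: a pair of terms. -/
structure Rule (F V : Type) where
  lhs : Tm F V
  rhs : Tm F V

/-- The usual variable conditions on a rewrite rule: the left-hand side is
not a variable and all variables of the right-hand side occur in the left-hand side. -/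
def WfRule {F V : Type} (ρ : Rule F V) : Prop :=
  (∀ x, ρ.lhs ≠ .var x) ∧ ∀ x, x ∈ ρ.rhs.vars → x ∈ ρ.lhs.vars

/-- `s` rewrites to `t` at position `p` using rule `ρ`. -/
def StepAt {F V : Type} (p : List Nat) (ρ : Rule F V) (s t : Tm F V) : Prop :=
  ∃ σ : V → Tm F V, Tm.sub p s = some (Tm.subst σ ρ.lhs) ∧ t = Tm.repl p s (Tm.subst σ ρ.rhs)

/-- The rewrite relation of a TRS (set of rules). -/
def Step {F V : Type} (R : Set (Rule F V)) (s t : Tm F V) : Prop :=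
  ∃ ρ ∈ R, ∃ p, StepAt p ρ s t

/-- `l` matches `t`: some substitution instance of `l` equals `t`. -/
def Matches {F V : Type} (l t : Tm F V) : Prop :=
  ∃ σ : V → Tm F V, Tm.subst σ l = t

/-- Reflexive-transitive closure of rewriting. -/
abbrev Steps {F V : Type} (R : Set (Rule F V)) : Tm F V → Tm F V → Prop :=
  Relation.ReflTransGen (Step R)

/-- Confluence on a set of terms. -/
def ConfluentOn {F V : Type} (R : Set (Rule F V)) (T : Set (Tm F V)) : Prop :=
  ∀ s ∈ T, ∀ t u, Steps R s t → Steps R s u → ∃ v, Steps R t v ∧ Steps R u v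

/-- Confluence (on all terms). -/
def Confluent {F V : Type} (R : Set (Rule F V)) : Prop :=
  ConfluentOn R Set.univ

/-- A relation is terminating if it admits no infinite sequences, i.e., its
inverse is well-founded. -/
def TerminatingRel {α : Type} (r : α → α → Prop) : Prop :=
  WellFounded (fun a b => r b a)

/-- One step of `A` relative to `B`: `→B* · →A · →B*`. -/
def RelStep {F V : Type} (A B : Set (Rule F V)) (s t : Tm F V) : Prop :=
  ∃ s' t', Steps B s s' ∧ Step A s' t' ∧ Steps B t' t

/-- Relative termination of `A/B`. -/
def RelTerminating {F V : Type} (A B : Set (Rule F V)) : Prop :=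
  TerminatingRel (RelStep A B)

/-- Signature with a binary `f`, constants `a`, `⊤`, `⊥`, and a unary `◇`. -/
inductive Sym10 : Type
  | f | a | top | bot | d

/-- The rule `f(a,x) → f(x,x)`. -/
def faRule : Rule Sym10 Nat :=
  ⟨Tm.app Sym10.f [Tm.app Sym10.a [], Tm.var 0], Tm.app Sym10.f [Tm.var 0, Tm.var 0]⟩

/-- The rule `⊤ → ⊥`. -/
def tbRule : Rule Sym10 Nat := ⟨Tm.app Sym10.top [], Tm.app Sym10.bot []⟩

/-- The rule `◇(x) → x`. -/
def dRule10 : Rule Sym10 Nat := ⟨Tm.app Sym10.d [Tm.var 0], Tm.var 0⟩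

namespace Proof10

open Tm

abbrev T := Tm Sym10 Nat
abbrev aTm : T := Tm.app Sym10.a []
abbrev dA : T := Tm.app Sym10.d [aTm]

instance : DecidableEq Sym10 := fun a b => by
  cases a <;> cases b <;> first | exact isTrue rfl | exact isFalse (by intro h; cases h)

/-- Whether a term is exactly the constant `a`. -/
def isA : T → Bool
  | .app .a [] => true
  | _ => false

lemma isA_iff {t : T} : isA t = true ↔ t = aTm := by
  cases t with
  | var x => simp [isA]
  | app g ts => cases g <;> cases ts <;> simp_all [isA]

lemma isA_app_cons (g : Sym10) (x : T) (l : List T) : isA (.app g (x :: l)) = false := by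
  cases g <;> rfl

lemma subst_app (σ : Nat → T) (g : Sym10) (ts : List T) :
    Tm.subst σ (Tm.app g ts) = Tm.app g (ts.map (Tm.subst σ)) := by
  rw [Tm.subst]
  congr 1
  simp [List.map_attach_eq_pmap]

lemma subst_var (σ : Nat → T) (x : Nat) : Tm.subst σ (Tm.var x) = σ x := by
  rw [Tm.subst]

mutual
def W : T → ℕ
  | .var _ => 0
  | .app g ts => (if g = Sym10.top then 1 else 0) + Wl ts + Ex g ts

def Ex : Sym10 → List T → ℕ
  | .f, [s, t] => if isA s then W t else 0
  | .f, [] => 0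
  | .f, [_] => 0
  | .f, _ :: _ :: _ :: _ => 0
  | .a, _ => 0
  | .top, _ => 0
  | .bot, _ => 0
  | .d, _ => 0

def Wl : List T → ℕ
  | [] => 0
  | t :: ts => W t + Wl ts
end

lemma W_var (x : Nat) : W (.var x) = 0 := by rw [W]
lemma W_app (g : Sym10) (ts : List T) :
    W (.app g ts) = (if g = Sym10.top then 1 else 0) + Wl ts + Ex g ts := by rw [W]
lemma Wl_nil : Wl [] = 0 := by rw [Wl]
lemma Wl_cons (t : T) (ts : List T) : Wl (t :: ts) = W t + Wl ts := by rw [Wl]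
lemma Ex_f2 (s t : T) : Ex Sym10.f [s, t] = if isA s then W t else 0 := by rw [Ex]

lemma Ex_nonf (g : Sym10) (hg : g ≠ Sym10.f) (ts : List T) : Ex g ts = 0 := by
  cases g <;> first | exact absurd rfl hg | rw [Ex]

lemma Ex_f_len (ts : List T) (h : ts.length ≠ 2) : Ex Sym10.f ts = 0 := by
  rcases ts with _ | ⟨a, _ | ⟨b, _ | _⟩⟩ <;> first | exact absurd rfl h | rw [Ex]

lemma Ex_eq_zero (g : Sym10) (ts : List T)
    (h : g ≠ Sym10.f ∨ ∀ s t : T, ts ≠ [s, t]) : Ex g ts = 0 := by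
  by_cases hg : g = Sym10.f
  · subst hg
    rcases ts with _ | ⟨a, _ | ⟨b, _ | _⟩⟩ <;> first
      | (exfalso; rcases h with h | h; exact h rfl; exact h _ _ rfl)
      | rw [Ex]
  · exact Ex_nonf g hg ts

lemma W_aTm : W aTm = 0 := by
  rw [W_app, Wl_nil, Ex_eq_zero] <;> simp

/-- Replacing an element of a list by another: effect on `Wl`. -/
lemma Wl_set : ∀ (ts : List T) (i : ℕ) (t t' : T), ts[i]? = some t →
    Wl (ts.set i t') + W t = Wl ts + W t'
  | [], i, t, t', h => by simp at h
  | x :: ts, 0, t, t', h => by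
      simp at h; subst h; simp [Wl_cons]; omega
  | x :: ts, i + 1, t, t', h => by
      simp at h
      have := Wl_set ts i t t' h
      simp [Wl_cons]
      omega

lemma Ex_set_le (g : Sym10) (ts : List T) (i : ℕ) (t t' : T)
    (h : ts[i]? = some t) (hA : isA t' = isA t) (hle : W t' ≤ W t) :
    Ex g (ts.set i t') ≤ Ex g ts := by
  by_cases hg : g = Sym10.f
  · subst hg
    by_cases hl : ts.length = 2
    · rcases ts with _ | ⟨s, _ | ⟨u, _ | _⟩⟩ <;> simp at hl
      rcases i with _ | ⟨_ | i⟩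
      · simp at h; subst h
        simp only [List.set, Ex_f2, hA]
        split <;> omega
      · simp at h; subst h
        simp only [List.set, Ex_f2]
        split <;> omega
      · simp at h
    · rw [Ex_f_len _ (by simpa using hl), Ex_f_len _ hl]
  · rw [Ex_nonf g hg, Ex_nonf g hg]

lemma W_app_set (g : Sym10) (ts : List T) (i : ℕ) (t t' : T)
    (h : ts[i]? = some t) (hA : isA t' = isA t) :
    (W t' ≤ W t → W (.app g (ts.set i t')) ≤ W (.app g ts)) ∧
    (W t' < W t → W (.app g (ts.set i t')) < W (.app g ts)) := by
  have hwl := Wl_set ts i t t' h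
  constructor <;> intro hle
  · have hex := Ex_set_le g ts i t t' h hA hle
    rw [W_app, W_app]; omega
  · have hex := Ex_set_le g ts i t t' h hA (Nat.le_of_lt hle)
    rw [W_app, W_app]; omega

/-- Context lemma. -/
lemma ctx : ∀ (p : List ℕ) (s u u' : T), Tm.sub p s = some u → isA u' = isA u →
    isA (Tm.repl p s u') = isA s ∧
    (W u' ≤ W u → W (Tm.repl p s u') ≤ W s) ∧
    (W u' < W u → W (Tm.repl p s u') < W s)
  | [], s, u, u', h, hA => by
      simp [Tm.sub] at h; subst h
      simp [Tm.repl, hA]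
  | i :: p, .var x, u, u', h, hA => by simp [Tm.sub] at h
  | i :: p, .app g ts, u, u', h, hA => by
      simp only [Tm.sub, Option.bind_eq_some_iff] at h
      obtain ⟨t0, ht0, hsub⟩ := h
      have ht0' : ts[i]? = some t0 := by simpa using ht0
      obtain ⟨ih1, ih2, ih3⟩ := ctx p t0 u u' hsub hA
      have hrepl : Tm.repl (i :: p) (.app g ts) u' =
          .app g (ts.set i (Tm.repl p t0 u')) := by
        rw [Tm.repl, ht0]
      obtain ⟨hle, hlt⟩ := W_app_set g ts i t0 (Tm.repl p t0 u') ht0' ih1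
      rw [hrepl]
      refine ⟨?_, fun h1 => hle (ih2 h1), fun h1 => hlt (ih3 h1)⟩
      rcases ts with _ | ⟨x, l⟩
      · simp at ht0'
      · rcases i with _ | i <;> simp [List.set, isA_app_cons]

lemma step_fa_le {s t : T} (h : Step ({faRule} : Set (Rule Sym10 Nat)) s t) :
    W t ≤ W s := by
  obtain ⟨ρ, hρ, p, σ, hsub, hrepl⟩ := h
  rw [Set.mem_singleton_iff] at hρ; subst hρ
  have hlhs : Tm.subst σ faRule.lhs = .app Sym10.f [aTm, σ 0] := by
    simp [faRule, subst_app, subst_var]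
  have hrhs : Tm.subst σ faRule.rhs = .app Sym10.f [σ 0, σ 0] := by
    simp [faRule, subst_app, subst_var]
  rw [hlhs] at hsub; rw [hrhs] at hrepl; subst hrepl
  have hisAa : isA aTm = true := by rw [isA_iff]
  have hWl : W (Tm.app Sym10.f [aTm, σ 0]) = 2 * W (σ 0) := by
    rw [W_app, Wl_cons, Wl_cons, Wl_nil, Ex_f2, W_aTm]
    simp only [hisAa, if_true]
    simp
    omega
  have hA : isA (Tm.app Sym10.f [σ 0, σ 0]) = isA (Tm.app Sym10.f [aTm, σ 0]) := by
    simp [isA_app_cons]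
  have hWr : W (Tm.app Sym10.f [σ 0, σ 0]) ≤ 2 * W (σ 0) := by
    rw [W_app, Wl_cons, Wl_cons, Wl_nil, Ex_f2]
    have hf0 : (if Sym10.f = Sym10.top then 1 else 0) = 0 := by simp
    rw [hf0]
    by_cases hb : isA (σ 0) = true
    · have hσ : σ 0 = aTm := isA_iff.mp hb
      rw [hσ, W_aTm, if_pos hisAa]
    · rw [if_neg hb]
      omega
  exact (ctx p s _ _ hsub hA).2.1 (by omega)

lemma step_tb_lt {s t : T} (h : Step ({tbRule} : Set (Rule Sym10 Nat)) s t) :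
    W t < W s := by
  obtain ⟨ρ, hρ, p, σ, hsub, hrepl⟩ := h
  rw [Set.mem_singleton_iff] at hρ; subst hρ
  have hlhs : Tm.subst σ tbRule.lhs = .app Sym10.top [] := by
    simp [tbRule, subst_app]
  have hrhs : Tm.subst σ tbRule.rhs = .app Sym10.bot [] := by
    simp [tbRule, subst_app]
  rw [hlhs] at hsub; rw [hrhs] at hrepl; subst hrepl
  have hA : isA (Tm.app Sym10.bot []) = isA (Tm.app Sym10.top []) := by rfl
  have hWt : W (Tm.app Sym10.top []) = 1 := by
    rw [W_app, Wl_nil, Ex_eq_zero]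
    · simp
    · exact Or.inl (by intro hh; cases hh)
  have hWb : W (Tm.app Sym10.bot []) = 0 := by
    rw [W_app, Wl_nil, Ex_eq_zero]
    · simp
    · exact Or.inl (by intro hh; cases hh)
  exact (ctx p s _ _ hsub hA).2.2 (by omega)

lemma steps_fa_le {s t : T} (h : Steps ({faRule} : Set (Rule Sym10 Nat)) s t) :
    W t ≤ W s := by
  induction h with
  | refl => exact le_refl _
  | tail _ hstep ih => exact le_trans (step_fa_le hstep) ih

lemma relstep_lt {s t : T} (h : RelStep ({tbRule} : Set (Rule Sym10 Nat)) {faRule} s t) :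
    W t < W s := by
  obtain ⟨s', t', h1, h2, h3⟩ := h
  calc W t ≤ W t' := steps_fa_le h3
    _ < W s' := step_tb_lt h2
    _ ≤ W s := steps_fa_le h1

/-- The cycle for part 2. -/
lemma cycle : RelStep ({dRule10} : Set (Rule Sym10 Nat)) {faRule}
    (Tm.app Sym10.f [aTm, dA]) (Tm.app Sym10.f [aTm, dA]) := by
  refine ⟨Tm.app Sym10.f [dA, dA], Tm.app Sym10.f [aTm, dA], ?_, ?_, Relation.ReflTransGen.refl⟩
  · refine Relation.ReflTransGen.single ⟨faRule, rfl, [], fun _ => dA, ?_, ?_⟩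
    · rw [Tm.sub]
      congr 1
      simp [faRule, subst_app, subst_var]
    · rw [Tm.repl]
      simp [faRule, subst_app, subst_var]
  · refine ⟨dRule10, rfl, [0], fun _ => aTm, ?_, ?_⟩
    · simp only [Tm.sub, List.getElem?_cons_zero]
      simp [dRule10, subst_app, subst_var]
    · rw [Tm.repl]
      simp [Tm.repl, dRule10, subst_var, List.set]

end Proof10

/-- `{f(a,x) → f(x,x)}` is weakly bounded duplicating but not
bounded duplicating. -/
theorem fa_weakly_bounded_not_bounded :
    RelTerminating ({tbRule} : Set (Rule Sym10 Nat)) ({faRule} : Set (Rule Sym10 Nat)) ∧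
    ¬ RelTerminating ({dRule10} : Set (Rule Sym10 Nat)) ({faRule} : Set (Rule Sym10 Nat)) := by
  constructor
  · exact Subrelation.wf (fun h => Proof10.relstep_lt h)
      (InvImage.wf Proof10.W Nat.lt_wfRel.wf)
  · intro h
    exact h.asymmetric _ _ Proof10.cycle Proof10.cycle
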